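/- arXiv:1710.06208 — 10 statements merged into one kernel-verified Lean document; each statement's English description precedes it below -/
import Mathlib

section
/- A numerical semigroup S is irreducible (i.e., it cannot be written as the intersection of two numerical semigroups each properly containing S) if and only if the number of special gaps of S is at most 1. -/
/-- A numerical semigroup: subset of ℕ closed under addition, containing 0, cofinite. -/
def IsNumericalSemigroup (S : Set ℕ) : Prop :=
  0 ∈ S ∧ (∀ a b, a ∈ S → b ∈ S → a + b ∈ S) ∧ Sᶜ.Finite

/-- The set of special gaps E(S). -/
def specialGaps (S : Set ℕ) : Set ℕ :=
  {x | x ∉ S ∧ 2 * x ∈ S ∧ ∀ s ∈ S, s ≠ 0 → x + s ∈ S}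

/-- `F` is the Frobenius number of `S`: the greatest natural number not in `S`. -/
def IsFrobenius (S : Set ℕ) (F : ℕ) : Prop :=
  F ∉ S ∧ ∀ m : ℕ, m ∉ S → m ≤ F

/-- Irreducible numerical semigroup. -/
def IsIrreducibleNS (S : Set ℕ) : Prop :=
  IsNumericalSemigroup S ∧ ∀ S₁ S₂ : Set ℕ, IsNumericalSemigroup S₁ →
    IsNumericalSemigroup S₂ → S = S₁ ∩ S₂ → S = S₁ ∨ S = S₂

/-- Atomic numerical semigroup. -/
def IsAtomicNS (S : Set ℕ) : Prop :=
  IsNumericalSemigroup S ∧ ∀ (F : ℕ) (S₁ S₂ : Set ℕ), IsFrobenius S F →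
    IsNumericalSemigroup S₁ → IsNumericalSemigroup S₂ →
    IsFrobenius S₁ F → IsFrobenius S₂ F → S = S₁ ∩ S₂ → S = S₁ ∨ S = S₂

/-- Pseudo-Frobenius numbers of `S`, as integers. -/
def pseudoFrob (S : Set ℕ) : Set ℤ :=
  {x | x ∉ (fun n : ℕ => (n : ℤ)) '' S ∧
    ∀ s ∈ S, s ≠ 0 → x + (s : ℤ) ∈ (fun n : ℕ => (n : ℤ)) '' S}

/-- The semigroup C(F): 0 together with all naturals greater than F/2, except F. -/
def NSC (F : ℕ) : Set ℕ := insert 0 ({n : ℕ | F / 2 < n} \ {F})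

/-- `x` is a minimal generator of `S`. -/
def IsMinGen (S : Set ℕ) (x : ℕ) : Prop :=
  x ∈ S ∧ x ≠ 0 ∧ ∀ a b, a ∈ S → b ∈ S → a ≠ 0 → b ≠ 0 → a + b ≠ x

lemma exists_max_of_finite {T : Set ℕ} (hfin : T.Finite) (hne : T.Nonempty) :
    ∃ x ∈ T, ∀ y ∈ T, y ≤ x := by
  obtain ⟨x, hx, hmax⟩ := Set.Finite.exists_maximalFor id T hfin hne
  exact ⟨x, hx, fun y hy => le_of_not_gt fun h => by
    have := hmax hy h.le; simp only [id] at this; omega⟩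

lemma max_mem_special {S S₁ : Set ℕ} (hS : IsNumericalSemigroup S)
    (hS₁ : IsNumericalSemigroup S₁) (hsub : S ⊆ S₁) (hne : S ≠ S₁) :
    ∃ x ∈ specialGaps S, x ∈ S₁ := by
  have hdne : (S₁ \ S).Nonempty := by
    obtain ⟨x, hx1, hx2⟩ := Set.exists_of_ssubset (hsub.ssubset_of_ne hne)
    exact ⟨x, hx1, hx2⟩
  have hdfin : (S₁ \ S).Finite := hS.2.2.subset fun y hy => hy.2
  obtain ⟨x, ⟨hxS₁, hxS⟩, hmax⟩ := exists_max_of_finite hdfin hdne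
  have hx0 : x ≠ 0 := fun h => hxS (h ▸ hS.1)
  have hbig : ∀ y ∈ S₁, x < y → y ∈ S := by
    intro y hy hlt
    by_contra hyS
    exact absurd (hmax y ⟨hy, hyS⟩) (not_le.mpr hlt)
  refine ⟨x, ⟨hxS, ?_, ?_⟩, hxS₁⟩
  · have : x + x ∈ S₁ := hS₁.2.1 x x hxS₁ hxS₁
    have h2 : x + x ∈ S := hbig _ this (by omega)
    simpa [two_mul] using h2
  · intro s hs hs0
    exact hbig _ (hS₁.2.1 x s hxS₁ (hsub hs)) (by omega)

lemma insert_special_NS {S : Set ℕ} (hS : IsNumericalSemigroup S) {x : ℕ}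
    (hx : x ∈ specialGaps S) : IsNumericalSemigroup (insert x S) := by
  obtain ⟨hxS, h2x, hadd⟩ := hx
  refine ⟨Or.inr hS.1, ?_, hS.2.2.subset (Set.compl_subset_compl.mpr (Set.subset_insert x S))⟩
  rintro a b (rfl | ha) (rfl | hb)
  · right; simpa [two_mul] using h2x
  · rcases eq_or_ne b 0 with rfl | hb0
    · left; rfl
    · exact Or.inr (hadd b hb hb0)
  · rcases eq_or_ne a 0 with rfl | ha0
    · left; omega
    · right; rw [add_comm]; exact hadd a ha ha0
  · exact Or.inr (hS.2.1 a b ha hb)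

theorem stmt3 (S : Set ℕ) (hS : IsNumericalSemigroup S) :
    IsIrreducibleNS S ↔ (specialGaps S).encard ≤ 1 := by
  constructor
  · intro hirr
    rw [Set.encard_le_one_iff]
    intro x y hx hy
    by_contra hxy
    have hS₁ := insert_special_NS hS hx
    have hS₂ := insert_special_NS hS hy
    have hsect : S = insert x S ∩ insert y S := by
      ext z
      constructor
      · intro hz; exact ⟨Or.inr hz, Or.inr hz⟩
      · rintro ⟨rfl | hz, hz'⟩
        · rcases hz' with rfl | hz'
          · exact absurd rfl hxy
          · exact hz'
        · exact hz
    rcases hirr.2 _ _ hS₁ hS₂ hsect with h | h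
    · exact hx.1 (h ▸ Set.mem_insert x S)
    · exact hy.1 (h ▸ Set.mem_insert y S)
  · intro hcard
    refine ⟨hS, fun S₁ S₂ hS₁ hS₂ heq => ?_⟩
    by_contra hcon
    push_neg at hcon
    obtain ⟨hne₁, hne₂⟩ := hcon
    have hsub₁ : S ⊆ S₁ := heq ▸ Set.inter_subset_left
    have hsub₂ : S ⊆ S₂ := heq ▸ Set.inter_subset_right
    obtain ⟨x₁, hx₁, hx₁S₁⟩ := max_mem_special hS hS₁ hsub₁ hne₁
    obtain ⟨x₂, hx₂, hx₂S₂⟩ := max_mem_special hS hS₂ hsub₂ hne₂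
    have : x₁ = x₂ := Set.encard_le_one_iff.mp hcard x₁ x₂ hx₁ hx₂
    subst this
    exact hx₁.1 (heq ▸ ⟨hx₁S₁, hx₂S₂⟩)
end

section
/- A numerical semigroup S with Frobenius number F is atomic (i.e., S cannot be written as the intersection of two numerical semigroups with Frobenius number F, each properly containing S) if and only if the number of special gaps of S is at most 2. -/
lemma frob_mem_specialGaps {S : Set ℕ} (hS : IsNumericalSemigroup S) {F : ℕ}
    (hF : IsFrobenius S F) : F ∈ specialGaps S := by
  have hFpos : 0 < F := by
    rcases Nat.eq_zero_or_pos F with h | h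
    · exact absurd (h ▸ hS.1) hF.1
    · exact h
  have hgt : ∀ m, F < m → m ∈ S := fun m hm => by
    by_contra h; exact absurd (hF.2 m h) (not_le.mpr hm)
  refine ⟨hF.1, hgt _ (by omega), fun s hs hs0 => hgt _ (by omega)⟩

lemma insert_ns {S : Set ℕ} (hS : IsNumericalSemigroup S) {F x : ℕ}
    (hF : IsFrobenius S F) (hx : x ∈ specialGaps S) (hxF : x ≠ F) :
    IsNumericalSemigroup (insert x S) ∧ IsFrobenius (insert x S) F := by
  obtain ⟨hxS, h2x, hadd⟩ := hx
  constructor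
  · refine ⟨Set.mem_insert_of_mem _ hS.1, ?_, ?_⟩
    · rintro a b (rfl | ha) (rfl | hb)
      · exact Set.mem_insert_of_mem _ (by simpa [two_mul] using h2x)
      · rcases Nat.eq_zero_or_pos b with rfl | hb0
        · exact Set.mem_insert _ _
        · exact Set.mem_insert_of_mem _ (hadd b hb (by omega))
      · rcases Nat.eq_zero_or_pos a with rfl | ha0
        · simpa using Set.mem_insert b S
        · exact Set.mem_insert_of_mem _ (by rw [Nat.add_comm]; exact hadd a ha (by omega))
      · exact Set.mem_insert_of_mem _ (hS.2.1 a b ha hb)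
    · exact hS.2.2.subset (by intro z hz; simp only [Set.mem_compl_iff, Set.mem_insert_iff] at *; tauto)
  · constructor
    · simp only [Set.mem_insert_iff]; push_neg
      exact ⟨fun h => hxF h.symm, hF.1⟩
    · intro m hm
      exact hF.2 m (fun h => hm (Set.mem_insert_of_mem _ h))

lemma exists_special_gap {S S₁ : Set ℕ} (hS : IsNumericalSemigroup S)
    (hS₁ : IsNumericalSemigroup S₁) {F : ℕ} (hF : IsFrobenius S F)
    (hF₁ : IsFrobenius S₁ F) (hsub : S ⊆ S₁) (hne : S ≠ S₁) :
    ∃ a, a ∈ specialGaps S ∧ a ≠ F ∧ a ∈ S₁ := by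
  have hTfin : (S₁ \ S).Finite := hS.2.2.subset (fun z hz => hz.2)
  have hTne : (S₁ \ S).Nonempty := by
    rcases Set.exists_of_ssubset (hsub.ssubset_of_ne hne) with ⟨a, ha, haS⟩
    exact ⟨a, ha, haS⟩
  classical
  obtain ⟨a, haT, hamax⟩ := hTfin.exists_maximalFor id _ hTne
  have hmax : ∀ b ∈ S₁ \ S, b ≤ a := by
    intro b hb
    rcases le_total b a with h | h
    · exact h
    · exact hamax hb h
  have haS : a ∉ S := haT.2
  have ha1 : a ∈ S₁ := haT.1
  have hapos : 0 < a := by rcases Nat.eq_zero_or_pos a with rfl | h; exact absurd hS.1 haS; exact h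
  have hstep : ∀ b, b ∈ S₁ → a < b → b ∈ S := by
    intro b hb hab
    by_contra h
    exact absurd (hmax b ⟨hb, h⟩) (not_le.mpr hab)
  refine ⟨a, ⟨haS, ?_, ?_⟩, ?_, ha1⟩
  · exact hstep _ (by simpa [two_mul] using hS₁.2.1 a a ha1 ha1) (by omega)
  · intro s hs hs0
    exact hstep _ (hS₁.2.1 a s ha1 (hsub hs)) (by omega)
  · rintro rfl; exact hF₁.1 ha1

theorem stmt4 (S : Set ℕ) (hS : IsNumericalSemigroup S) (F : ℕ)
    (hF : IsFrobenius S F) :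
    (∀ S₁ S₂ : Set ℕ, IsNumericalSemigroup S₁ → IsNumericalSemigroup S₂ →
      IsFrobenius S₁ F → IsFrobenius S₂ F → S = S₁ ∩ S₂ → S = S₁ ∨ S = S₂) ↔
    (specialGaps S).encard ≤ 2 := by
  constructor
  · intro h
    -- key: any two non-F special gaps coincide
    have key : ∀ x ∈ specialGaps S, ∀ y ∈ specialGaps S, x ≠ F → y ≠ F → x = y := by
      intro x hx y hy hxF hyF
      by_contra hxy
      obtain ⟨hNS₁, hFr₁⟩ := insert_ns hS hF hx hxF
      obtain ⟨hNS₂, hFr₂⟩ := insert_ns hS hF hy hyF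
      have hint : S = insert x S ∩ insert y S := by
        apply Set.Subset.antisymm
        · exact Set.subset_inter (Set.subset_insert _ _) (Set.subset_insert _ _)
        · rintro z ⟨(rfl | hz1), (h2 | h2)⟩
          · exact absurd h2 hxy
          · exact h2
          · exact hz1
          · exact hz1
      rcases h _ _ hNS₁ hNS₂ hFr₁ hFr₂ hint with heq | heq
      · exact hx.1 (heq ▸ Set.mem_insert x S)
      · exact hy.1 (heq ▸ Set.mem_insert y S)
    by_cases hex : ∃ x ∈ specialGaps S, x ≠ F
    · obtain ⟨x₀, hx₀, hx₀F⟩ := hex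
      have hsub : specialGaps S ⊆ {F, x₀} := by
        intro z hz
        by_cases hzF : z = F
        · exact Or.inl hzF
        · exact Or.inr (key z hz x₀ hx₀ hzF hx₀F)
      calc (specialGaps S).encard ≤ ({F, x₀} : Set ℕ).encard := Set.encard_mono hsub
        _ ≤ ({x₀} : Set ℕ).encard + 1 := Set.encard_insert_le _ _
        _ = 2 := by rw [Set.encard_singleton]; rfl
    · push_neg at hex
      have hsub : specialGaps S ⊆ {F} := fun z hz => hex z hz
      calc (specialGaps S).encard ≤ ({F} : Set ℕ).encard := Set.encard_mono hsub
        _ ≤ 2 := by rw [Set.encard_singleton]; norm_num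
  · intro hcard S₁ S₂ hNS₁ hNS₂ hFr₁ hFr₂ hint
    by_contra hcon
    push_neg at hcon
    obtain ⟨hne₁, hne₂⟩ := hcon
    have hsub₁ : S ⊆ S₁ := hint ▸ Set.inter_subset_left
    have hsub₂ : S ⊆ S₂ := hint ▸ Set.inter_subset_right
    obtain ⟨a, haE, haF, ha₁⟩ := exists_special_gap hS hNS₁ hF hFr₁ hsub₁ hne₁
    obtain ⟨b, hbE, hbF, hb₂⟩ := exists_special_gap hS hNS₂ hF hFr₂ hsub₂ hne₂
    have hab : a ≠ b := by
      rintro rfl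
      exact haE.1 (hint ▸ ⟨ha₁, hb₂⟩)
    have hFE : F ∈ specialGaps S := frob_mem_specialGaps hS hF
    have htrip : ({F, a, b} : Set ℕ) ⊆ specialGaps S := by
      rintro z (rfl | rfl | rfl); exacts [hFE, haE, hbE]
    have h3 : ({F, a, b} : Set ℕ).encard = 3 := by
      rw [Set.encard_insert_of_notMem (by simp [Ne.symm haF, Ne.symm hbF]),
        Set.encard_pair hab]; rfl
    have := Set.encard_mono htrip
    rw [h3] at this
    have := this.trans hcard
    norm_num at this
end

section
/- Let g₁ < g₂ be positive integers. There exists a numerical semigroup S with E(S) = {g₁, g₂} if and only if g₂/2 < g₁ and at least one of the following holds: (g₂ − g₁) divides g₂, or (2g₁ − g₂) does not divide g₂. -/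
lemma ns_mul {S : Set ℕ} (h0 : 0 ∈ S) (hcl : ∀ a b, a ∈ S → b ∈ S → a + b ∈ S) :
    ∀ n x, x ∈ S → n * x ∈ S := by
  intro n x hx
  induction n with
  | zero => simpa using h0
  | succ k ih =>
    have := hcl _ _ ih hx
    simpa [Nat.succ_mul] using this

lemma ns_reach {S : Set ℕ} (h0 : 0 ∈ S) (hcl : ∀ a b, a ∈ S → b ∈ S → a + b ∈ S)
    {F : ℕ} (hF : ∀ x, x ∉ S → x ≤ F) :
    ∀ g, g ∉ S → ∃ p c, c ∈ S ∧ p = g + c ∧ p ∉ S ∧ (∀ s ∈ S, s ≠ 0 → p + s ∈ S) := by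
  have main : ∀ k g, g ∉ S → F - g ≤ k →
      ∃ p c, c ∈ S ∧ p = g + c ∧ p ∉ S ∧ (∀ s ∈ S, s ≠ 0 → p + s ∈ S) := by
    intro k
    induction k with
    | zero =>
      intro g hg hk
      refine ⟨g, 0, h0, by omega, hg, ?_⟩
      intro s hs hs0
      by_contra hgs
      have h1 := hF _ hg
      have h2 := hF _ hgs
      omega
    | succ k ih =>
      intro g hg hk
      by_cases hP : ∀ s ∈ S, s ≠ 0 → g + s ∈ S
      · exact ⟨g, 0, h0, by omega, hg, hP⟩
      · push_neg at hP
        obtain ⟨s, hs, hs0, hgs⟩ := hP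
        have hgF := hF _ hg
        have hgsF := hF _ hgs
        obtain ⟨p, c, hc, hpc, hpS, hpPF⟩ := ih (g + s) hgs (by omega)
        exact ⟨p, s + c, hcl _ _ hs hc, by omega, hpS, hpPF⟩
  intro g hg
  exact main (F - g) g hg le_rfl

lemma forward_dir (g₁ g₂ : ℕ) (h0 : 0 < g₁) (h12 : g₁ < g₂)
    (S : Set ℕ) (hS : IsNumericalSemigroup S) (hE : specialGaps S = {g₁, g₂}) :
    g₂ < 2 * g₁ ∧ ((g₂ - g₁) ∣ g₂ ∨ ¬ (2 * g₁ - g₂) ∣ g₂) := by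
  obtain ⟨hS0, hScl, hSfin⟩ := hS
  have hmem : ∀ x, x ∈ specialGaps S ↔ (x = g₁ ∨ x = g₂) := by
    intro x
    rw [hE]
    simp [Set.mem_insert_iff]
  have hg₁ : g₁ ∈ specialGaps S := (hmem g₁).2 (Or.inl rfl)
  have hg₂ : g₂ ∈ specialGaps S := (hmem g₂).2 (Or.inr rfl)
  obtain ⟨hg₁S, hg₁2, hg₁PF⟩ := hg₁
  obtain ⟨hg₂S, hg₂2, hg₂PF⟩ := hg₂
  -- Frobenius number is g₂
  have hne : (Sᶜ).Nonempty := ⟨g₂, hg₂S⟩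
  have hbdd : BddAbove (Sᶜ) := hSfin.bddAbove
  set F := sSup (Sᶜ) with hFdef
  have hFmem : F ∈ Sᶜ := Nat.sSup_mem hne hbdd
  have hFmax : ∀ x, x ∉ S → x ≤ F := fun x hx => le_csSup hbdd hx
  have hF1 : 1 ≤ F := by
    rcases Nat.eq_zero_or_pos F with h | h
    · exact absurd hS0 (h ▸ hFmem)
    · exact h
  have hFspec : F ∈ specialGaps S := by
    refine ⟨hFmem, ?_, ?_⟩
    · by_contra h
      have := hFmax _ h
      omega
    · intro s hs hs0
      by_contra h
      have := hFmax _ h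
      omega
  have hFg₂ : F = g₂ := by
    rcases (hmem F).1 hFspec with h | h
    · have := hFmax _ hg₂S
      omega
    · exact h
  rw [hFg₂] at hFmax
  clear hFspec hFmem hF1 hbdd hne hFdef
  -- d = g₂ - g₁ is a gap
  have hdS : g₂ - g₁ ∉ S := by
    intro hd
    have := hg₁PF _ hd (by omega)
    rw [show g₁ + (g₂ - g₁) = g₂ by omega] at this
    exact hg₂S this
  -- g₂ < 2 g₁
  have h2g : g₂ ≠ 2 * g₁ := fun h => hg₂S (h ▸ hg₁2)
  have hlt : g₂ < 2 * g₁ := by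
    by_contra hge
    have hdg : g₁ < g₂ - g₁ := by omega
    obtain ⟨p, c, hc, hpc, hpS, hpPF⟩ := ns_reach hS0 hScl hFmax _ hdS
    by_cases h2p : 2 * p ∈ S
    · rcases (hmem p).1 ⟨hpS, h2p, hpPF⟩ with h | h
      · omega
      · have : c = g₁ := by omega
        exact hg₁S (this ▸ hc)
    · have := hFmax _ h2p
      omega
  refine ⟨hlt, ?_⟩
  -- divisibility part
  by_cases he : (2 * g₁ - g₂) ∣ g₂
  · left
    set d := g₂ - g₁ with hd
    set e := 2 * g₁ - g₂ with hedef
    have he1 : 1 ≤ e := by omega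
    have hd1 : 1 ≤ d := by omega
    -- e is a gap
    have heS : e ∉ S := by
      intro heS
      obtain ⟨k, hk⟩ := he
      have : k * e ∈ S := ns_mul hS0 hScl k e heS
      rw [show k * e = g₂ by rw [hk]; ring] at this
      exact hg₂S this
    have h2dvd : e ∣ 2 * d := by
      have := Nat.dvd_sub he (dvd_refl e)
      rwa [show g₂ - e = 2 * d by omega] at this
    obtain ⟨m, hm⟩ := h2dvd
    have hm1 : 1 ≤ m := by
      rcases Nat.eq_zero_or_pos m with h | h
      · rw [h] at hm; omega
      · exact h
    rcases Nat.lt_or_ge m 3 with hm3 | hm3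
    · -- m = 1 or 2 : d divides g₂
      interval_cases m
      · exact ⟨4, by omega⟩
      · exact ⟨3, by omega⟩
    · -- m ≥ 3 : contradiction
      exfalso
      have h3e : 3 * e ≤ 2 * d := by
        calc 3 * e = e * 3 := by ring
        _ ≤ e * m := Nat.mul_le_mul_left e hm3
        _ = 2 * d := hm.symm
      -- 2d ∈ S
      have h2dS : 2 * d ∈ S := by
        by_contra h2dS
        obtain ⟨p, c, hc, hpc, hpS, hpPF⟩ := ns_reach hS0 hScl hFmax _ h2dS
        by_cases h2p : 2 * p ∈ S
        · rcases (hmem p).1 ⟨hpS, h2p, hpPF⟩ with h | h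
          · omega
          · have : c = e := by omega
            exact heS (this ▸ hc)
        · have := hFmax _ h2p
          omega
      -- d + s ∈ S for all s ∈ S, s ≠ 0
      have hdall : ∀ s ∈ S, s ≠ 0 → d + s ∈ S := by
        intro s hs hs0
        by_contra hds
        obtain ⟨p, c, hc, hpc, hpS, hpPF⟩ := ns_reach hS0 hScl hFmax _ hds
        have hs' : s + c ∈ S := hScl _ _ hs hc
        by_cases h2p : 2 * p ∈ S
        · rcases (hmem p).1 ⟨hpS, h2p, hpPF⟩ with h | h
          · have : s + c = e := by omega
            exact heS (this ▸ hs')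
          · have : s + c = g₁ := by omega
            exact hg₁S (this ▸ hs')
        · have : 2 * p = (2 * d + (s + c)) + (s + c) := by omega
          exact h2p (this ▸ hScl _ _ (hScl _ _ h2dS hs') hs')
      have hdspec : d ∈ specialGaps S := ⟨hdS, h2dS, hdall⟩
      rcases (hmem d).1 hdspec with h | h <;> omega
  · exact Or.inr he

def NSzero (g₁ g₂ : ℕ) : Set ℕ := {x | x = 0 ∨ (g₂ / 2 < x ∧ x ≠ g₁ ∧ x ≠ g₂)}

lemma lemA (g₁ g₂ : ℕ) (h0 : 0 < g₁) (h12 : g₁ < g₂) (hlt : g₂ < 2 * g₁)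
    (hd : (g₂ - g₁) ∣ g₂) (he : (2 * g₁ - g₂) ∣ g₂) :
    IsNumericalSemigroup (NSzero g₁ g₂) ∧ specialGaps (NSzero g₁ g₂) = {g₁, g₂} := by
  set d := g₂ - g₁ with hddef
  set e := 2 * g₁ - g₂ with hedef
  have hd1 : 1 ≤ d := by omega
  have he1 : 1 ≤ e := by omega
  have hmem : ∀ x, x ∈ NSzero g₁ g₂ ↔ (x = 0 ∨ (g₂ / 2 < x ∧ x ≠ g₁ ∧ x ≠ g₂)) :=
    fun x => Iff.rfl
  -- e = d or e = 2d
  have hde : d ∣ e := by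
    have := Nat.dvd_sub hd (dvd_mul_left d 2)
    rwa [show g₂ - 2 * d = e by omega] at this
  have hed : e ∣ 2 * d := by
    have := Nat.dvd_sub he (dvd_refl e)
    rwa [show g₂ - e = 2 * d by omega] at this
  obtain ⟨a, ha⟩ := hde
  obtain ⟨b, hb⟩ := hed
  have hab : d * (a * b) = d * 2 := by
    rw [← mul_assoc, ← ha, ← hb]; ring
  have hab2 : a * b = 2 := Nat.eq_of_mul_eq_mul_left (by omega) hab
  have ha2 : a ≤ 2 := Nat.le_of_dvd (by norm_num) ⟨b, hab2.symm⟩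
  have hcases : e = d ∨ e = 2 * d := by
    interval_cases a
    · omega
    · left; omega
    · right; omega
  have hNS : IsNumericalSemigroup (NSzero g₁ g₂) := by
    refine ⟨Or.inl rfl, ?_, ?_⟩
    · intro x y hx hy
      rw [hmem] at hx hy ⊢
      omega
    · refine Set.Finite.subset (Set.finite_Iic g₂) ?_
      intro x hx
      rw [Set.mem_compl_iff, hmem] at hx
      simp only [Set.mem_Iic]
      omega
  refine ⟨hNS, ?_⟩
  ext x
  simp only [Set.mem_insert_iff, Set.mem_singleton_iff]
  constructor
  · rintro ⟨hxS, hx2, hxPF⟩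
    rw [hmem] at hxS hx2
    by_contra hne
    push_neg at hne
    obtain ⟨hne1, hne2⟩ := hne
    have hxL : x ≤ g₂ / 2 ∧ x ≠ 0 := by omega
    by_cases hxd : x = d
    · -- x = d : use hcases
      rcases hcases with hc | hc
      · omega
      · -- e = 2d = 2x; witness s = 2x, x + 2x = 3x = g₁
        have h3x : x + 2 * x ∈ NSzero g₁ g₂ := hxPF (2 * x) (by rw [hmem]; omega) (by omega)
        rw [hmem] at h3x
        omega
    · -- witness s = g₂ - x
      have hsmem : g₂ - x ∈ NSzero g₁ g₂ := by rw [hmem]; omega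
      have := hxPF _ hsmem (by omega)
      rw [hmem] at this
      omega
  · intro hx
    rcases hx with hx | hx <;> subst hx
    · refine ⟨by rw [hmem]; omega, by rw [hmem]; omega, ?_⟩
      intro s hs hs0
      rw [hmem] at hs ⊢
      omega
    · refine ⟨by rw [hmem]; omega, by rw [hmem]; omega, ?_⟩
      intro s hs hs0
      rw [hmem] at hs ⊢
      omega

def NSB (g₁ g₂ : ℕ) : Set ℕ :=
  {x | (2 * g₁ - g₂) ∣ x ∨ (g₂ / 2 < x ∧ x ≠ g₁ ∧ (g₂ < x ∨ ¬ (2 * g₁ - g₂) ∣ (g₂ - x)))}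

lemma lemB (g₁ g₂ : ℕ) (h0 : 0 < g₁) (h12 : g₁ < g₂) (hlt : g₂ < 2 * g₁)
    (he : ¬ (2 * g₁ - g₂) ∣ g₂) :
    IsNumericalSemigroup (NSB g₁ g₂) ∧ specialGaps (NSB g₁ g₂) = {g₁, g₂} := by
  set d := g₂ - g₁ with hddef
  set e := 2 * g₁ - g₂ with hedef
  have hd1 : 1 ≤ d := by omega
  have he1 : 1 ≤ e := by omega
  have hLd : 2 * d ≤ g₂ := by omega
  have hmem : ∀ x, x ∈ NSB g₁ g₂ ↔
      (e ∣ x ∨ (g₂ / 2 < x ∧ x ≠ g₁ ∧ (g₂ < x ∨ ¬ e ∣ (g₂ - x)))) := fun x => Iff.rfl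
  -- basic non-divisibilities
  have hed : ¬ e ∣ d := by
    intro h
    exact he (by rw [show g₂ = d + d + e by omega]; exact dvd_add (dvd_add h h) dvd_rfl)
  have heg₁ : ¬ e ∣ g₁ := by
    intro h
    exact hed (by have := Nat.dvd_sub h (dvd_refl e); rwa [show g₁ - e = d by omega] at this)
  -- g₁ ∉, g₂ ∉
  have hg₁out : g₁ ∉ NSB g₁ g₂ := by
    rw [hmem]
    rintro (h | h)
    · exact heg₁ h
    · omega
  have hg₂out : g₂ ∉ NSB g₁ g₂ := by
    rw [hmem]
    rintro (h | h)
    · exact he h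
    · rcases h.2.2 with h' | h'
      · omega
      · exact h' (by rw [show g₂ - g₂ = 0 by omega]; exact dvd_zero e)
  -- closure
  have hcl : ∀ x y, x ∈ NSB g₁ g₂ → y ∈ NSB g₁ g₂ → x + y ∈ NSB g₁ g₂ := by
    have key : ∀ x y, e ∣ x → y ∈ NSB g₁ g₂ → x + y ∈ NSB g₁ g₂ := by
      intro x y hx hy
      rw [hmem] at hy ⊢
      rcases hy with hy | ⟨hyL, hyg₁, hyc⟩
      · exact Or.inl (dvd_add hx hy)
      · right
        rcases Nat.eq_zero_or_pos x with hx0 | hx0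
        · subst hx0; simpa using ⟨hyL, hyg₁, hyc⟩
        · have hxe : e ≤ x := Nat.le_of_dvd hx0 hx
          refine ⟨by omega, ?_, ?_⟩
          · -- x + y ≠ g₁ since y > g₂/2 ≥ d and x ≥ e
            omega
          · rcases hyc with hy' | hy'
            · exact Or.inl (by omega)
            · rcases Nat.lt_or_ge g₂ (x + y) with h' | h'
              · exact Or.inl h'
              · right
                intro hdvd
                exact hy' (by
                  have : g₂ - y = (g₂ - (x + y)) + x := by omega
                  rw [this]
                  exact dvd_add hdvd hx)
    intro x y hx hy
    rcases (hmem x).1 hx with hx' | hx'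
    · exact key x y hx' hy
    · rcases (hmem y).1 hy with hy' | hy'
      · rw [show x + y = y + x by ring]
        exact key y x hy' hx
      · rw [hmem]
        right
        refine ⟨by omega, by omega, Or.inl (by omega)⟩
  have hNS : IsNumericalSemigroup (NSB g₁ g₂) := by
    refine ⟨(hmem 0).2 (Or.inl (dvd_zero e)), hcl, ?_⟩
    refine Set.Finite.subset (Set.finite_Iic g₂) ?_
    intro x hx
    rw [Set.mem_compl_iff, hmem] at hx
    simp only [Set.mem_Iic]
    by_contra h
    exact hx (Or.inr ⟨by omega, by omega, Or.inl (by omega)⟩)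
  refine ⟨hNS, ?_⟩
  have heIn : e ∈ NSB g₁ g₂ := (hmem e).2 (Or.inl dvd_rfl)
  ext x
  simp only [Set.mem_insert_iff, Set.mem_singleton_iff]
  constructor
  · rintro ⟨hxS, hx2, hxPF⟩
    by_contra hne
    push_neg at hne
    obtain ⟨hne1, hne2⟩ := hne
    rw [hmem] at hxS
    push_neg at hxS
    obtain ⟨hxnd, hxcl⟩ := hxS
    -- cases on why x ∉ NSB
    by_cases hxg : x ≤ g₂ ∧ e ∣ (g₂ - x)
    · -- witness s = e
      obtain ⟨hxle, hxdvd⟩ := hxg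
      have hxlt : x < g₂ := by omega
      have hxee : e ≤ g₂ - x := Nat.le_of_dvd (by omega) hxdvd
      have hstep : x + e ∉ NSB g₁ g₂ := by
        rw [hmem]
        rintro (h | ⟨hL, hg, hc⟩)
        · exact hxnd (by
            have := Nat.dvd_sub h (dvd_refl e)
            rwa [show x + e - e = x by omega] at this)
        · rcases hc with h' | h'
          · omega
          · exact h' (by
              have := Nat.dvd_sub hxdvd (dvd_refl e)
              rwa [show g₂ - x - e = g₂ - (x + e) by omega] at this)
      exact hstep (hxPF e heIn (by omega))
    · push_neg at hxg
      -- x ≤ g₂/2 (since clause2 fails and x ≠ g₁ and not the dvd case)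
      have hxL : x ≤ g₂ / 2 := by
        by_contra h
        push_neg at h
        obtain ⟨h1, h2⟩ := hxcl h hne1
        exact hxg (by omega) h2
      have hx0 : x ≠ 0 := fun h => hxnd (h ▸ dvd_zero e)
      by_cases hx2g : 2 * x = g₂
      · rw [hmem] at hx2
        rcases hx2 with h | h
        · exact he (hx2g ▸ h)
        · rcases h.2.2 with h' | h'
          · omega
          · exact h' (by rw [show g₂ - 2 * x = 0 by omega]; exact dvd_zero e)
      · by_cases hxd : x = d
        · -- witness e : d + e = g₁ ∉
          have := hxPF e heIn (by omega)
          rw [show x + e = g₁ by omega] at this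
          exact hg₁out this
        · -- witness g₂ - x
          have hsmem : g₂ - x ∈ NSB g₁ g₂ := by
            rw [hmem]
            right
            refine ⟨by omega, by omega, Or.inr ?_⟩
            rwa [show g₂ - (g₂ - x) = x by omega]
          have := hxPF _ hsmem (by omega)
          rw [show x + (g₂ - x) = g₂ by omega] at this
          exact hg₂out this
  · intro hx
    rcases hx with hx | hx <;> rw [hx]
    · refine ⟨hg₁out, (hmem _).2 (Or.inr ⟨by omega, by omega, Or.inl (by omega)⟩), ?_⟩
      intro s hs hs0
      rw [hmem] at hs ⊢
      rcases hs with hs | hs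
      · have hse : e ≤ s := Nat.le_of_dvd (by omega) hs
        rcases Nat.lt_or_ge g₂ (g₁ + s) with h' | h'
        · exact Or.inr ⟨by omega, by omega, Or.inl h'⟩
        · -- g₁ + s ≤ g₂, s ≤ d, s ≠ d since ¬e∣d
          have hsd : s ≤ d := by omega
          have hsnd : s ≠ d := fun h => hed (h ▸ hs)
          refine Or.inr ⟨by omega, by omega, Or.inr ?_⟩
          intro hdvd
          exact hed (by
            have : d = (g₂ - (g₁ + s)) + s := by omega
            rw [this]
            exact dvd_add hdvd hs)
      · exact Or.inr ⟨by omega, by omega, Or.inl (by omega)⟩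
    · refine ⟨hg₂out, (hmem _).2 (Or.inr ⟨by omega, by omega, Or.inl (by omega)⟩), ?_⟩
      intro s hs hs0
      rw [hmem] at hs ⊢
      rcases hs with hs | hs
      · exact Or.inr ⟨by omega, by omega, Or.inl (by
          have := Nat.le_of_dvd (by omega) hs
          omega)⟩
      · exact Or.inr ⟨by omega, by omega, Or.inl (by omega)⟩

theorem stmt7 (g₁ g₂ : ℕ) (h0 : 0 < g₁) (h12 : g₁ < g₂) :
    (∃ S : Set ℕ, IsNumericalSemigroup S ∧ specialGaps S = {g₁, g₂}) ↔
    (g₂ < 2 * g₁ ∧ ((g₂ - g₁) ∣ g₂ ∨ ¬ (2 * g₁ - g₂) ∣ g₂)) := by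
  constructor
  · rintro ⟨S, hS, hE⟩
    exact forward_dir g₁ g₂ h0 h12 S hS hE
  · rintro ⟨hlt, hdisj⟩
    by_cases he : (2 * g₁ - g₂) ∣ g₂
    · have hd : (g₂ - g₁) ∣ g₂ := hdisj.resolve_right (fun h => h he)
      obtain ⟨h1, h2⟩ := lemA g₁ g₂ h0 h12 hlt hd he
      exact ⟨_, h1, h2⟩
    · obtain ⟨h1, h2⟩ := lemB g₁ g₂ h0 h12 hlt he
      exact ⟨_, h1, h2⟩
end

section
/- Let g₁, g₂ be positive integers with g₂/2 < g₁ < g₂, and let S be a numerical semigroup with E(S) = {g₁, g₂}. Then BPF(S) = {g₁, g₂}, where BPF(S) is the set of pseudo-Frobenius numbers of S that are greater than F(S)/2. -/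
theorem stmt8 (g₁ g₂ : ℕ) (h0 : 0 < g₁) (h1 : g₂ < 2 * g₁) (h2 : g₁ < g₂)
    (S : Set ℕ) (hS : IsNumericalSemigroup S) (F : ℕ) (hF : IsFrobenius S F)
    (hE : specialGaps S = {g₁, g₂}) :
    {x ∈ pseudoFrob S | (F : ℤ) < 2 * x} = {(g₁ : ℤ), (g₂ : ℤ)} := by
  obtain ⟨h0S, hadd, hfin⟩ := hS
  obtain ⟨hFnS, hFmax⟩ := hF
  have hmemS : ∀ n : ℕ, F < n → n ∈ S := by
    intro n hn; by_contra h; exact absurd (hFmax n h) (not_le.2 hn)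
  have hFpos : 0 < F := by
    rcases Nat.eq_zero_or_pos F with h | h
    · subst h; exact absurd h0S hFnS
    · exact h
  have hFE : F ∈ specialGaps S := by
    refine ⟨hFnS, hmemS _ (by omega), fun s hs hs0 => hmemS _ ?_⟩
    have : 0 < s := Nat.pos_of_ne_zero hs0
    omega
  have hg2E : g₂ ∈ specialGaps S := by rw [hE]; right; rfl
  have hg1E : g₁ ∈ specialGaps S := by rw [hE]; left; rfl
  have hFg2 : F = g₂ := by
    rw [hE] at hFE
    have hle : g₂ ≤ F := hFmax g₂ hg2E.1
    simp only [Set.mem_insert_iff, Set.mem_singleton_iff] at hFE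
    omega
  ext x
  simp only [Set.mem_setOf_eq, Set.mem_insert_iff, Set.mem_singleton_iff]
  constructor
  · rintro ⟨⟨hxnS, hxprop⟩, hxF⟩
    have hx0 : 0 ≤ x := by omega
    obtain ⟨n, rfl⟩ := Int.eq_ofNat_of_zero_le hx0
    have hnS : n ∉ S := fun h => hxnS ⟨n, h, rfl⟩
    have hn2 : 2 * n ∈ S := by
      apply hmemS; omega
    have hprop : ∀ s ∈ S, s ≠ 0 → n + s ∈ S := by
      intro s hs hs0
      obtain ⟨m, hm, hme⟩ := hxprop s hs hs0
      simp only at hme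
      have : m = n + s := by exact_mod_cast hme
      rwa [← this]
    have : n ∈ specialGaps S := ⟨hnS, hn2, hprop⟩
    rw [hE] at this
    rcases this with h | h
    · left; simp [h]
    · right; simp only [Set.mem_singleton_iff] at h; simp [h]
  · rintro (rfl | rfl)
    · obtain ⟨hn1, h2g, hp⟩ := hg1E
      refine ⟨⟨fun h => ?_, fun s hs hs0 => ⟨g₁ + s, hp s hs hs0, by push_cast; ring⟩⟩, by push_cast; omega⟩
      obtain ⟨m, hm, hme⟩ := h
      simp only at hme
      have : m = g₁ := by exact_mod_cast hme
      exact hn1 (this ▸ hm)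
    · obtain ⟨hn1, h2g, hp⟩ := hg2E
      refine ⟨⟨fun h => ?_, fun s hs hs0 => ⟨g₂ + s, hp s hs hs0, by push_cast; ring⟩⟩, by push_cast; omega⟩
      obtain ⟨m, hm, hme⟩ := h
      simp only at hme
      have : m = g₂ := by exact_mod_cast hme
      exact hn1 (this ▸ hm)
end

section
/- Let g₁, g₂ be positive integers with g₂/2 < g₁ < g₂ and let S be a numerical semigroup with E(S) = {g₁, g₂}. Then there exist irreducible numerical semigroups S₁ with Frobenius number g₁ and S₂ with Frobenius number g₂ such that g₁ ∈ S₂ and S = S₁ ∩ S₂. -/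
lemma irr_of_specialGaps (T : Set ℕ) (F : ℕ) (hT : IsNumericalSemigroup T) (hF : F ∉ T)
    (h : specialGaps T ⊆ {F}) : IsIrreducibleNS T := by
  refine ⟨hT, ?_⟩
  intro A B hA hB hAB
  by_contra hcon
  push_neg at hcon
  obtain ⟨hTA, hTB⟩ := hcon
  -- T = A ∩ B, so T ⊆ A, T ⊆ B
  have hTsubA : T ⊆ A := by rw [hAB]; exact Set.inter_subset_left
  have hTsubB : T ⊆ B := by rw [hAB]; exact Set.inter_subset_right
  -- key: for any semigroup C ⊇ T with C ≠ T, max (C \ T) is a special gap of T hence = F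
  have key : ∀ C : Set ℕ, IsNumericalSemigroup C → T ⊆ C → T ≠ C → F ∈ C := by
    intro C hC hsub hne
    have hdne : (C \ T).Nonempty := by
      rw [Set.diff_nonempty]
      intro hCT
      exact hne (le_antisymm hsub hCT)
    have hdfin : (C \ T).Finite := hT.2.2.subset (fun x hx => hx.2)
    obtain ⟨x, hxmem, hxmax⟩ := Set.Finite.exists_maximalFor id _ hdfin hdne
    have hx0 : x ≠ 0 := by rintro rfl; exact hxmem.2 hT.1
    have hmax' : ∀ y ∈ C \ T, y ≤ x := by
      intro y hy
      by_contra hlt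
      push_neg at hlt
      have := hxmax (j := y) hy (le_of_lt hlt)
      simp only [id] at this
      omega
    have hxsg : x ∈ specialGaps T := by
      refine ⟨hxmem.2, ?_, ?_⟩
      · have h2 : 2 * x ∈ C := by
          have := hC.2.1 x x hxmem.1 hxmem.1; rwa [two_mul]
        by_contra h2n
        have := hmax' (2 * x) ⟨h2, h2n⟩
        omega
      · intro s hs hs0
        have hmem : x + s ∈ C := hC.2.1 x s hxmem.1 (hsub hs)
        by_contra hn
        have := hmax' (x + s) ⟨hmem, hn⟩
        omega
    have := h hxsg
    simp at this
    subst this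
    exact hxmem.1
  have hFA : F ∈ A := key A hA hTsubA hTA
  have hFB : F ∈ B := key B hB hTsubB hTB
  exact hF (by rw [hAB]; exact ⟨hFA, hFB⟩)

theorem stmt13 (g₁ g₂ : ℕ) (h0 : 0 < g₁) (h1 : g₂ < 2 * g₁) (h2 : g₁ < g₂)
    (S : Set ℕ) (hS : IsNumericalSemigroup S) (hE : specialGaps S = {g₁, g₂}) :
    ∃ S₁ S₂ : Set ℕ, IsIrreducibleNS S₁ ∧ IsFrobenius S₁ g₁ ∧
      IsIrreducibleNS S₂ ∧ IsFrobenius S₂ g₂ ∧ g₁ ∈ S₂ ∧ S = S₁ ∩ S₂ := by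
  obtain ⟨hz, hadd, hfin⟩ := hS
  have hg1 : g₁ ∈ specialGaps S := by rw [hE]; exact Set.mem_insert _ _
  have hg2 : g₂ ∈ specialGaps S := by rw [hE]; exact Set.mem_insert_of_mem _ rfl
  obtain ⟨hg1n, hg1d, hg1a⟩ := hg1
  obtain ⟨hg2n, hg2d, hg2a⟩ := hg2
  -- all numbers greater than g₂ are in S
  have hbig : ∀ n, g₂ < n → n ∈ S := by
    by_contra hcon
    push_neg at hcon
    obtain ⟨n, hn1, hn2⟩ := hcon
    have hne : Sᶜ.Nonempty := ⟨n, hn2⟩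
    obtain ⟨M, hM, hMmax⟩ := Set.Finite.exists_maximalFor id _ hfin hne
    have hmax' : ∀ y, y ∉ S → y ≤ M := by
      intro y hy
      by_contra hlt
      push_neg at hlt
      have := hMmax (j := y) hy hlt.le
      simp only [id] at this
      omega
    have hM0 : M ≠ 0 := fun h => hM (h ▸ hz)
    have hMsg : M ∈ specialGaps S := by
      refine ⟨hM, ?_, ?_⟩
      · by_contra hc; have := hmax' _ hc; omega
      · intro s hs hs0; by_contra hc; have := hmax' _ hc; omega
    rw [hE] at hMsg
    have hnM := hmax' n hn2
    rcases hMsg with h | h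
    · simp only [h] at *; omega
    · simp only [Set.mem_singleton_iff] at h; omega
  have hgap : ∀ n, n ∉ S → n ≤ g₂ := by
    intro n hn; by_contra hc; exact hn (hbig n (by omega))
  have hsub : g₂ - g₁ ∉ S := by
    intro h
    have := hg1a _ h (by omega)
    rw [show g₁ + (g₂ - g₁) = g₂ from by omega] at this
    exact hg2n this
  -- key structural lemma: every gap b with 2b > g₂ has g₁ - b ∈ S or g₂ - b ∈ S
  have lemA : ∀ k b, g₂ - b ≤ k → b ∉ S → g₂ < 2 * b →
      (b ≤ g₁ ∧ g₁ - b ∈ S) ∨ (b ≤ g₂ ∧ g₂ - b ∈ S) := by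
    intro k
    induction k with
    | zero =>
      intro b hk hb h2b
      have := hgap b hb
      have hbeq : b = g₂ := by omega
      subst hbeq
      right
      exact ⟨le_rfl, by rw [Nat.sub_self]; exact hz⟩
    | succ k ih =>
      intro b hk hb h2b
      have hble := hgap b hb
      by_cases hbg1 : b = g₁
      · subst hbg1; left; exact ⟨le_rfl, by rw [Nat.sub_self]; exact hz⟩
      by_cases hbg2 : b = g₂
      · subst hbg2; right; exact ⟨le_rfl, by rw [Nat.sub_self]; exact hz⟩
      have hnsg : b ∉ specialGaps S := by
        rw [hE]; simp only [Set.mem_insert_iff, Set.mem_singleton_iff]; tauto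
      have h2bS : 2 * b ∈ S := hbig _ (by omega)
      have hex : ∃ s ∈ S, s ≠ 0 ∧ b + s ∉ S := by
        by_contra hc
        push_neg at hc
        exact hnsg ⟨hb, h2bS, fun s hs hs0 => hc s hs hs0⟩
      obtain ⟨s, hs, hs0, hbs⟩ := hex
      have hb'le := hgap _ hbs
      have hrec := ih (b + s) (by omega) hbs (by omega)
      rcases hrec with ⟨hle, hmem⟩ | ⟨hle, hmem⟩
      · left
        refine ⟨by omega, ?_⟩
        have := hadd _ _ hmem hs
        rwa [show g₁ - (b + s) + s = g₁ - b from by omega] at this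
      · right
        refine ⟨by omega, ?_⟩
        have := hadd _ _ hmem hs
        rwa [show g₂ - (b + s) + s = g₂ - b from by omega] at this
  -- the two semigroups
  set T2 : Set ℕ := {n | n ∈ S ∨ (g₂ < 2 * n ∧ n ≠ g₂ ∧ g₂ - n ∉ S)} with hT2def
  set T1 : Set ℕ :=
    {n | n ∈ S ∨ g₁ < n ∨ (g₁ < 2 * n ∧ n ≠ g₁ ∧ g₁ - n ∉ S ∧ n ∉ T2)} with hT1def
  have hmem2 : ∀ n, n ∈ T2 ↔ (n ∈ S ∨ (g₂ < 2 * n ∧ n ≠ g₂ ∧ g₂ - n ∉ S)) := fun n => Iff.rfl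
  have hmem1 : ∀ n, n ∈ T1 ↔
      (n ∈ S ∨ g₁ < n ∨ (g₁ < 2 * n ∧ n ≠ g₁ ∧ g₁ - n ∉ S ∧ n ∉ T2)) := fun n => Iff.rfl
  have hg2T2 : g₂ ∉ T2 := by
    rw [hmem2]; rintro (h | ⟨_, h, _⟩); exact hg2n h; exact h rfl
  have hg1T1 : g₁ ∉ T1 := by
    rw [hmem1]; rintro (h | h | ⟨_, h, _⟩); exact hg1n h; omega; exact h rfl
  have hST2 : S ⊆ T2 := fun n h => (hmem2 n).mpr (Or.inl h)
  have hST1 : S ⊆ T1 := fun n h => (hmem1 n).mpr (Or.inl h)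
  have hg1T2 : g₁ ∈ T2 := (hmem2 g₁).mpr (Or.inr ⟨by omega, by omega, hsub⟩)
  -- T2 is a numerical semigroup
  have key2 : ∀ a b, a ∈ S → (g₂ < 2 * b ∧ b ≠ g₂ ∧ g₂ - b ∉ S) → a + b ∈ T2 := by
    intro a b ha ⟨hb1, hb2, hb3⟩
    have hblt : b < g₂ := by
      rcases Nat.lt_or_ge b g₂ with h | h
      · exact h
      · exfalso; apply hb3; rw [show g₂ - b = 0 from by omega]; exact hz
    rw [hmem2]
    by_cases hab : a + b ∈ S
    · exact Or.inl hab
    have hable := hgap _ hab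
    right
    refine ⟨by omega, ?_, ?_⟩
    · intro h
      exact hb3 (by rw [show g₂ - b = a from by omega]; exact ha)
    · intro hc
      have habne : a + b ≠ g₂ := by
        intro h; exact hb3 (by rw [show g₂ - b = a from by omega]; exact ha)
      apply hb3
      have := hadd _ _ hc ha
      rwa [show g₂ - (a + b) + a = g₂ - b from by omega] at this
  have hT2ns : IsNumericalSemigroup T2 := by
    refine ⟨hST2 hz, ?_, ?_⟩
    · intro a b ha hb
      rw [hmem2] at ha hb
      rcases ha with ha | ha <;> rcases hb with hb | hb
      · exact hST2 (hadd _ _ ha hb)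
      · exact key2 a b ha hb
      · rw [add_comm]; exact key2 b a hb ha
      · exact hST2 (hbig _ (by omega))
    · exact hfin.subset (fun n hn hnS => hn (hST2 hnS))
  have hFrob2 : IsFrobenius T2 g₂ :=
    ⟨hg2T2, fun m hm => hgap m (fun h => hm (hST2 h))⟩
  -- special gaps of T2 are contained in {g₂}
  have hsgT2 : specialGaps T2 ⊆ {g₂} := by
    rintro x ⟨hx, h2x, hxa⟩
    simp only [Set.mem_singleton_iff]
    by_contra hxg2
    have hxS : x ∉ S := fun h => hx (hST2 h)
    have hx0 : x ≠ 0 := fun h => hx (hST2 (h ▸ hz))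
    have hxle : x ≤ g₂ := hgap x hxS
    have hxlt : x < g₂ := by omega
    by_cases hgx : g₂ - x ∈ S
    · have := hxa _ (hST2 hgx) (by omega)
      rw [show x + (g₂ - x) = g₂ from by omega] at this
      exact hg2T2 this
    · have h2xle : 2 * x ≤ g₂ := by
        by_contra hc
        exact hx ((hmem2 x).mpr (Or.inr ⟨by omega, hxg2, hgx⟩))
      have h2xne : 2 * x ≠ g₂ := fun h => hg2T2 (h ▸ h2x)
      have hyT2 : g₂ - x ∉ T2 := by
        intro hy
        have := hxa _ hy (by omega)
        rw [show x + (g₂ - x) = g₂ from by omega] at this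
        exact hg2T2 this
      exact hyT2 ((hmem2 _).mpr (Or.inr ⟨by omega, by omega,
        by rw [show g₂ - (g₂ - x) = x from by omega]; exact hxS⟩))
  have hirr2 : IsIrreducibleNS T2 := irr_of_specialGaps T2 g₂ hT2ns hg2T2 hsgT2
  -- T1 is a numerical semigroup
  have key1 : ∀ a b, a ∈ S → a ≠ 0 →
      (g₁ < 2 * b ∧ b ≠ g₁ ∧ g₁ - b ∉ S ∧ b ∉ T2) → a + b ∈ T1 := by
    intro a b ha ha0 ⟨hb1, hb2, hb3, hb4⟩
    have hblt : b < g₁ := by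
      rcases Nat.lt_or_ge b g₁ with h | h
      · exact h
      · exfalso; apply hb3; rw [show g₁ - b = 0 from by omega]; exact hz
    rw [hmem1]
    by_cases hab : a + b ∈ S
    · exact Or.inl hab
    by_cases habgt : g₁ < a + b
    · exact Or.inr (Or.inl habgt)
    push_neg at habgt
    right; right
    have habne : a + b ≠ g₁ := by
      intro h; exact hb3 (by rw [show g₁ - b = a from by omega]; exact ha)
    have hg1ab : g₁ - (a + b) ∉ S := by
      intro hc
      apply hb3
      have := hadd _ _ hc ha
      rwa [show g₁ - (a + b) + a = g₁ - b from by omega] at this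
    refine ⟨by omega, habne, hg1ab, ?_⟩
    intro hT
    rw [hmem2] at hT
    rcases hT with h | ⟨hc1, hc2, hc3⟩
    · exact hab h
    rcases lemA g₂ (a + b) (Nat.sub_le _ _) hab hc1 with ⟨_, hm⟩ | ⟨_, hm⟩
    · exact hg1ab hm
    · exact hc3 hm
  have hT1ns : IsNumericalSemigroup T1 := by
    refine ⟨hST1 hz, ?_, ?_⟩
    · intro a b ha hb
      rw [hmem1] at ha hb
      rcases ha with ha | ha | ha <;> rcases hb with hb | hb | hb
      · exact hST1 (hadd _ _ ha hb)
      · exact (hmem1 _).mpr (Or.inr (Or.inl (by omega)))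
      · by_cases ha0 : a = 0
        · subst ha0; rw [zero_add]; exact (hmem1 _).mpr (Or.inr (Or.inr hb))
        · exact key1 a b ha ha0 hb
      · exact (hmem1 _).mpr (Or.inr (Or.inl (by omega)))
      · exact (hmem1 _).mpr (Or.inr (Or.inl (by omega)))
      · exact (hmem1 _).mpr (Or.inr (Or.inl (by omega)))
      · by_cases hb0 : b = 0
        · subst hb0; rw [add_zero]; exact (hmem1 _).mpr (Or.inr (Or.inr ha))
        · rw [add_comm]; exact key1 b a hb hb0 ha
      · exact (hmem1 _).mpr (Or.inr (Or.inl (by omega)))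
      · exact (hmem1 _).mpr (Or.inr (Or.inl (by omega)))
    · exact hfin.subset (fun n hn hnS => hn (hST1 hnS))
  have hFrob1 : IsFrobenius T1 g₁ := by
    refine ⟨hg1T1, fun m hm => ?_⟩
    by_contra hc
    exact hm ((hmem1 m).mpr (Or.inr (Or.inl (by omega))))
  -- special gaps of T1 are contained in {g₁}
  have hsgT1 : specialGaps T1 ⊆ {g₁} := by
    rintro x ⟨hx, h2x, hxa⟩
    simp only [Set.mem_singleton_iff]
    by_contra hxg1
    have hxS : x ∉ S := fun h => hx (hST1 h)
    have hx0 : x ≠ 0 := fun h => hx (hST1 (h ▸ hz))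
    have hxle : x ≤ g₁ := by
      by_contra hc
      exact hx ((hmem1 x).mpr (Or.inr (Or.inl (by omega))))
    have hxlt : x < g₁ := by omega
    by_cases hgx : g₁ - x ∈ S
    · have := hxa _ (hST1 hgx) (by omega)
      rw [show x + (g₁ - x) = g₁ from by omega] at this
      exact hg1T1 this
    by_cases hxT2 : x ∈ T2
    · rw [hmem2] at hxT2
      rcases hxT2 with h | ⟨hc1, _, hc3⟩
      · exact hxS h
      rcases lemA g₂ x (Nat.sub_le _ _) hxS hc1 with ⟨_, hm⟩ | ⟨_, hm⟩
      · exact hgx hm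
      · exact hc3 hm
    have h2xle : 2 * x ≤ g₁ := by
      by_contra hc
      exact hx ((hmem1 x).mpr (Or.inr (Or.inr ⟨by omega, hxg1, hgx, hxT2⟩)))
    have h2xne : 2 * x ≠ g₁ := fun h => hg1T1 (h ▸ h2x)
    have hyT1 : g₁ - x ∉ T1 := by
      intro hy
      have := hxa _ hy (by omega)
      rw [show x + (g₁ - x) = g₁ from by omega] at this
      exact hg1T1 this
    have hyS : g₁ - x ∉ S := fun h => hyT1 (hST1 h)
    have hyT2 : g₁ - x ∈ T2 := by
      by_contra hyc
      exact hyT1 ((hmem1 _).mpr (Or.inr (Or.inr ⟨by omega, by omega,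
        by rw [show g₁ - (g₁ - x) = x from by omega]; exact hxS, hyc⟩)))
    rw [hmem2] at hyT2
    rcases hyT2 with h | ⟨hc1, _, hc3⟩
    · exact hyS h
    rcases lemA g₂ (g₁ - x) (Nat.sub_le _ _) hyS hc1 with ⟨_, hm⟩ | ⟨_, hm⟩
    · rw [show g₁ - (g₁ - x) = x from by omega] at hm
      exact hxS hm
    · exact hc3 hm
  have hirr1 : IsIrreducibleNS T1 := irr_of_specialGaps T1 g₁ hT1ns hg1T1 hsgT1
  -- S = T1 ∩ T2
  have hinter : S = T1 ∩ T2 := by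
    ext n
    constructor
    · intro h; exact ⟨hST1 h, hST2 h⟩
    · rintro ⟨h1, h2⟩
      by_contra hnS
      rw [hmem1] at h1
      rcases h1 with h | hgt | ⟨_, _, _, hnT2⟩
      · exact hnS h
      · rw [hmem2] at h2
        rcases h2 with h | ⟨hc1, _, hc3⟩
        · exact hnS h
        rcases lemA g₂ n (Nat.sub_le _ _) hnS hc1 with ⟨hle, _⟩ | ⟨_, hm⟩
        · omega
        · exact hc3 hm
      · exact hnT2 h2
  exact ⟨T1, T2, hirr1, hFrob1, hirr2, hFrob2, hg1T2, hinter⟩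
end

section
/- If S is a numerical semigroup with Frobenius number F, then T = S ∪ {x ∈ ℕ \ S : F − x ∉ S and x > F/2} is an irreducible numerical semigroup with Frobenius number F. -/
theorem stmt14 (S : Set ℕ) (hS : IsNumericalSemigroup S) (F : ℕ)
    (hF : IsFrobenius S F) :
    IsIrreducibleNS (S ∪ {x : ℕ | x ∉ S ∧ F - x ∉ S ∧ F < 2 * x}) ∧
    IsFrobenius (S ∪ {x : ℕ | x ∉ S ∧ F - x ∉ S ∧ F < 2 * x}) F := by
  obtain ⟨h0, hadd, hfin⟩ := hS
  obtain ⟨hFn, hFle⟩ := hF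
  set T := S ∪ {x : ℕ | x ∉ S ∧ F - x ∉ S ∧ F < 2 * x} with hTdef
  have hgt : ∀ n, F < n → n ∈ S := by
    intro n hn; by_contra h; exact absurd (hFle n h) (by omega)
  have hST : S ⊆ T := Set.subset_union_left
  have hNT : IsNumericalSemigroup T := by
    refine ⟨Or.inl h0, ?_, hfin.subset (Set.compl_subset_compl.mpr Set.subset_union_left)⟩
    rintro a b (ha | ha) (hb | hb)
    · exact Or.inl (hadd a b ha hb)
    · rcases eq_or_ne a 0 with rfl | ha0
      · rw [zero_add]; exact Or.inr hb
      by_cases hab : a + b ∈ S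
      · exact Or.inl hab
      · refine Or.inr ⟨hab, ?_, by have := hb.2.2; omega⟩
        intro hc
        have h1 : a + b ≤ F := hFle _ hab
        have h2 : (F - (a + b)) + a ∈ S := hadd _ _ hc ha
        rw [show (F - (a + b)) + a = F - b by omega] at h2
        exact hb.2.1 h2
    · rcases eq_or_ne b 0 with rfl | hb0
      · rw [add_zero]; exact Or.inr ha
      by_cases hab : a + b ∈ S
      · exact Or.inl hab
      · refine Or.inr ⟨hab, ?_, by have := ha.2.2; omega⟩
        intro hc
        have h1 : a + b ≤ F := hFle _ hab
        have h2 : (F - (a + b)) + b ∈ S := hadd _ _ hc hb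
        rw [show (F - (a + b)) + b = F - a by omega] at h2
        exact ha.2.1 h2
    · exact Or.inl (hgt _ (by have := ha.2.2; have := hb.2.2; omega))
  have hFT : IsFrobenius T F := by
    constructor
    · rintro (h | h)
      · exact hFn h
      · have h2 := h.2.1
        rw [show F - F = 0 by omega] at h2
        exact h2 h0
    · intro m hm
      exact hFle m (fun h => hm (Or.inl h))
  have hmax : ∀ T' : Set ℕ, IsNumericalSemigroup T' → T ⊆ T' → F ∉ T' → T' = T := by
    intro T' hT' hsub hFnT
    apply Set.Subset.antisymm _ hsub
    intro x hx
    by_cases hxS : x ∈ S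
    · exact Or.inl hxS
    have hxF : x ≤ F := hFle x hxS
    have hxneF : x ≠ F := fun h => hFnT (h ▸ hx)
    have hFxS : F - x ∉ S := by
      intro h
      have hm : (F - x) + x ∈ T' := hT'.2.1 _ _ (hsub (Or.inl h)) hx
      rw [show F - x + x = F by omega] at hm
      exact hFnT hm
    refine Or.inr ⟨hxS, hFxS, ?_⟩
    by_contra hle
    have h2x : 2 * x ≤ F := by omega
    have hFxT' : F - x ∉ T' := by
      intro h
      have hm : x + (F - x) ∈ T' := hT'.2.1 _ _ hx h
      rw [show x + (F - x) = F by omega] at hm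
      exact hFnT hm
    have hFxT : F - x ∉ T := fun h => hFxT' (hsub h)
    have hcond : ¬ (F - x ∉ S ∧ F - (F - x) ∉ S ∧ F < 2 * (F - x)) := by
      intro h; exact hFxT (Or.inr h)
    rw [show F - (F - x) = x by omega] at hcond
    have h2 : ¬ (F < 2 * (F - x)) := fun h => hcond ⟨hFxS, hxS, h⟩
    have hxx : 2 * x = F := by omega
    have hm : x + x ∈ T' := hT'.2.1 _ _ hx hx
    rw [show x + x = F by omega] at hm
    exact hFnT hm
  refine ⟨⟨hNT, ?_⟩, hFT⟩
  intro S₁ S₂ h1 h2 heq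
  have hF12 : F ∉ S₁ ∨ F ∉ S₂ := by
    by_contra h
    push_neg at h
    exact hFT.1 (heq ▸ Set.mem_inter h.1 h.2)
  rcases hF12 with h | h
  · left
    have hsub : T ⊆ S₁ := heq ▸ Set.inter_subset_left
    exact (hmax S₁ h1 hsub h).symm
  · right
    have hsub : T ⊆ S₂ := heq ▸ Set.inter_subset_right
    exact (hmax S₂ h2 hsub h).symm
end

section
/- For every positive integer F, the set C(F), defined as {0} ∪ {n ∈ ℕ : n ≥ (F+1)/2} \ {F} when F is odd and {0} ∪ {n ∈ ℕ : n ≥ F/2 + 1} \ {F} when F is even, is an irreducible numerical semigroup with Frobenius number F. -/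
lemma memNSC (F n : ℕ) : n ∈ NSC F ↔ n = 0 ∨ (F / 2 < n ∧ n ≠ F) := by
  simp [NSC]

lemma NSC_sub (F : ℕ) (hF : 0 < F) (S₁ : Set ℕ) (h₁ : IsNumericalSemigroup S₁)
    (hsub : NSC F ⊆ S₁) (hFn : F ∉ S₁) : S₁ ⊆ NSC F := by
  intro x hx
  by_contra hxS
  rw [memNSC] at hxS
  push_neg at hxS
  obtain ⟨hx0, hx2⟩ := hxS
  have hxF : x ≠ F := fun h => hFn (h ▸ hx)
  have hxle : x ≤ F / 2 := by
    by_contra h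
    exact hxF (hx2 (by omega))
  by_cases hc : x < F - F / 2
  · have hmem : F - x ∈ NSC F := by
      rw [memNSC]
      right
      omega
    have := h₁.2.1 x (F - x) hx (hsub hmem)
    rw [show x + (F - x) = F by omega] at this
    exact hFn this
  · have hxx : x + x = F := by omega
    have := h₁.2.1 x x hx hx
    rw [hxx] at this
    exact hFn this

theorem stmt16 (F : ℕ) (hF : 0 < F) :
    IsIrreducibleNS (NSC F) ∧ IsFrobenius (NSC F) F := by
  have hns : IsNumericalSemigroup (NSC F) := by
    refine ⟨(memNSC F 0).2 (Or.inl rfl), ?_, ?_⟩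
    · intro a b ha hb
      rw [memNSC] at ha hb ⊢
      rcases ha with rfl | ⟨ha1, ha2⟩
      · simpa using hb
      rcases hb with rfl | ⟨hb1, hb2⟩
      · simp; omega
      · right; omega
    · apply Set.Finite.subset (Set.finite_Iic F)
      intro n hn
      simp only [Set.mem_compl_iff, memNSC] at hn
      push_neg at hn
      simp only [Set.mem_Iic]
      by_contra h
      have := hn.2 (by omega); omega
  have hfrob : IsFrobenius (NSC F) F := by
    constructor
    · rw [memNSC]; push_neg; exact ⟨by omega, fun _ => rfl⟩
    · intro m hm
      rw [memNSC] at hm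
      push_neg at hm
      by_contra h
      have := hm.2 (by omega); omega
  refine ⟨⟨hns, ?_⟩, hfrob⟩
  intro S₁ S₂ h₁ h₂ heq
  have hsub₁ : NSC F ⊆ S₁ := heq ▸ Set.inter_subset_left
  have hsub₂ : NSC F ⊆ S₂ := heq ▸ Set.inter_subset_right
  by_cases hF1 : F ∈ S₁
  · by_cases hF2 : F ∈ S₂
    · exfalso
      exact hfrob.1 (heq ▸ ⟨hF1, hF2⟩)
    · exact Or.inr (Set.Subset.antisymm hsub₂ (NSC_sub F hF S₂ h₂ hsub₂ hF2))
  · exact Or.inl (Set.Subset.antisymm hsub₁ (NSC_sub F hF S₁ h₁ hsub₁ hF1))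
end

section
/- For every positive integer F, C(F) is the unique irreducible numerical semigroup with Frobenius number F all of whose minimal generators are greater than F/2. -/
lemma mem_NSC {F n : ℕ} : n ∈ NSC F ↔ n = 0 ∨ (F / 2 < n ∧ n ≠ F) := by
  simp [NSC, Set.mem_insert_iff, Set.mem_diff, Set.mem_setOf_eq]

lemma NSC_ns {F : ℕ} (hF : 0 < F) : IsNumericalSemigroup (NSC F) := by
  refine ⟨Or.inl rfl, ?_, ?_⟩
  · intro a b ha hb
    rw [mem_NSC] at ha hb ⊢
    omega
  · apply Set.Finite.subset (Set.finite_Iic F)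
    intro m hm
    simp only [Set.mem_compl_iff, mem_NSC] at hm
    simp only [Set.mem_Iic]
    omega

lemma NSC_frob {F : ℕ} (hF : 0 < F) : IsFrobenius (NSC F) F := by
  constructor
  · rw [mem_NSC]; omega
  · intro m hm; rw [mem_NSC] at hm; omega

lemma NSC_max {F : ℕ} (hF : 0 < F) {T : Set ℕ} (hT : IsNumericalSemigroup T)
    (hsub : NSC F ⊆ T) (hFT : F ∉ T) : T = NSC F := by
  apply Set.Subset.antisymm _ hsub
  intro t ht
  by_contra htn
  rw [mem_NSC] at htn
  push_neg at htn
  obtain ⟨ht0, htF⟩ := htn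
  have htle : t ≤ F / 2 := by
    by_contra h
    push_neg at h
    exact hFT ((htF h) ▸ ht)
  by_cases h2 : 2 * t = F
  · have : t + t ∈ T := hT.2.1 t t ht ht
    rw [show t + t = F by omega] at this
    exact hFT this
  · have hmem : F - t ∈ NSC F := mem_NSC.mpr (Or.inr ⟨by omega, by omega⟩)
    have : t + (F - t) ∈ T := hT.2.1 _ _ ht (hsub hmem)
    rw [show t + (F - t) = F by omega] at this
    exact hFT this

lemma NSC_irr {F : ℕ} (hF : 0 < F) : IsIrreducibleNS (NSC F) := by
  refine ⟨NSC_ns hF, ?_⟩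
  intro S₁ S₂ h1 h2 heq
  have hFn : F ∉ NSC F := (NSC_frob hF).1
  have hF12 : F ∉ S₁ ∨ F ∉ S₂ := by
    by_contra h
    push_neg at h
    exact hFn (heq ▸ (⟨h.1, h.2⟩ : F ∈ S₁ ∩ S₂))
  rcases hF12 with h | h
  · left
    exact (NSC_max hF h1 (by rw [heq]; exact Set.inter_subset_left) h).symm
  · right
    exact (NSC_max hF h2 (by rw [heq]; exact Set.inter_subset_right) h).symm

theorem stmt17 (F : ℕ) (hF : 0 < F) :
    (IsIrreducibleNS (NSC F) ∧ IsFrobenius (NSC F) F ∧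
      (∀ x, IsMinGen (NSC F) x → F < 2 * x)) ∧
    (∀ S : Set ℕ, IsIrreducibleNS S → IsFrobenius S F →
      (∀ x, IsMinGen S x → F < 2 * x) → S = NSC F) := by
  constructor
  · refine ⟨NSC_irr hF, NSC_frob hF, ?_⟩
    intro x hx
    have h1 := hx.1
    have h2 := hx.2.1
    rw [mem_NSC] at h1
    omega
  · intro S hirr hfrob hgen
    obtain ⟨⟨h0, hadd, hfin⟩, hirr2⟩ := hirr
    -- Step 1: S ⊆ NSC F
    have hsub : S ⊆ NSC F := by
      intro s hs
      by_contra hsn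
      rw [mem_NSC] at hsn
      push_neg at hsn
      obtain ⟨hs0, hsF⟩ := hsn
      have hsle : 2 * s ≤ F := by
        by_cases h : F / 2 < s
        · exact absurd (hsF h ▸ hs) hfrob.1
        · omega
      classical
      have hex : ∃ t, t ∈ S ∧ t ≠ 0 ∧ 2 * t ≤ F := ⟨s, hs, hs0, hsle⟩
      set m := Nat.find hex with hm
      obtain ⟨hmS, hm0, hmle⟩ := Nat.find_spec hex
      have hmg : IsMinGen S m := by
        refine ⟨hmS, hm0, ?_⟩
        intro a b ha hb ha0 hb0 hab
        have halt : a < m := by omega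
        exact Nat.find_min hex halt ⟨ha, ha0, by omega⟩
      have := hgen m hmg
      omega
    -- Step 2: equality
    by_contra hne
    have hDfin : (NSC F \ S).Finite := hfin.subset (fun y hy => hy.2)
    have hDne : (NSC F \ S).Nonempty := by
      rw [Set.diff_nonempty]
      intro hcon
      exact hne (Set.Subset.antisymm hsub hcon)
    obtain ⟨x, hxD, hxmax0⟩ : ∃ x ∈ NSC F \ S, ∀ y ∈ NSC F \ S, id x ≤ id y → id x = id y := by
      obtain ⟨x, hx⟩ := hDfin.exists_maximal hDne
      exact ⟨x, hx.1, fun y hy hle => le_antisymm hle (hx.2 hy hle)⟩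
    have hxmax : ∀ y ∈ NSC F \ S, y ≤ x := by
      intro y hy
      by_contra h
      push_neg at h
      exact absurd (hxmax0 y hy (le_of_lt h)) (ne_of_lt h)
    have hx1 : x ∈ NSC F := hxD.1
    have hx2 : x ∉ S := hxD.2
    have hx0 : x ≠ 0 := fun h => hx2 (h ▸ h0)
    have hxF : x ≠ F := by
      intro h
      have := (NSC_frob hF).1
      exact this (h ▸ hx1)
    have hstep : ∀ s ∈ S, s ≠ 0 → x + s ∈ S := by
      intro s hsS hs0
      have hmem : x + s ∈ NSC F := (NSC_ns hF).2.1 x s hx1 (hsub hsS)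
      by_contra h
      have := hxmax (x + s) ⟨hmem, h⟩
      omega
    have h2x : x + x ∈ S := by
      have hmem : x + x ∈ NSC F := (NSC_ns hF).2.1 x x hx1 hx1
      by_contra h
      have := hxmax (x + x) ⟨hmem, h⟩
      omega
    have h2F : F + F ∈ S := by
      by_contra h
      have := hfrob.2 _ h
      omega
    have hFstep : ∀ s ∈ S, s ≠ 0 → F + s ∈ S := by
      intro s hsS hs0
      by_contra h
      have := hfrob.2 _ h
      omega
    have hS1 : IsNumericalSemigroup (insert x S) := by
      refine ⟨Or.inr h0, ?_, ?_⟩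
      · intro a b ha hb
        rcases Set.mem_insert_iff.mp ha with rfl | haS
        · rcases Set.mem_insert_iff.mp hb with rfl | hbS
          · exact Or.inr h2x
          · by_cases hb0 : b = 0
            · subst hb0; exact Or.inl rfl
            · exact Or.inr (hstep b hbS hb0)
        · rcases Set.mem_insert_iff.mp hb with rfl | hbS
          · by_cases ha0 : a = 0
            · subst ha0; simp
            · rw [add_comm]; exact Or.inr (hstep a haS ha0)
          · exact Or.inr (hadd a b haS hbS)
      · exact hfin.subset (Set.compl_subset_compl.mpr (Set.subset_insert _ _))
    have hS2 : IsNumericalSemigroup (insert F S) := by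
      refine ⟨Or.inr h0, ?_, ?_⟩
      · intro a b ha hb
        rcases Set.mem_insert_iff.mp ha with rfl | haS
        · rcases Set.mem_insert_iff.mp hb with rfl | hbS
          · exact Or.inr h2F
          · by_cases hb0 : b = 0
            · subst hb0; exact Or.inl rfl
            · exact Or.inr (hFstep b hbS hb0)
        · rcases Set.mem_insert_iff.mp hb with rfl | hbS
          · by_cases ha0 : a = 0
            · subst ha0; simp
            · rw [add_comm]; exact Or.inr (hFstep a haS ha0)
          · exact Or.inr (hadd a b haS hbS)
      · exact hfin.subset (Set.compl_subset_compl.mpr (Set.subset_insert _ _))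
    have heq : S = insert x S ∩ insert F S := by
      apply Set.Subset.antisymm
      · intro y hy
        exact ⟨Or.inr hy, Or.inr hy⟩
      · rintro y ⟨hy1, hy2⟩
        rcases Set.mem_insert_iff.mp hy1 with rfl | hyS
        · rcases Set.mem_insert_iff.mp hy2 with h | hyS
          · exact absurd h hxF
          · exact hyS
        · exact hyS
    rcases hirr2 _ _ hS1 hS2 heq with h | h
    · exact hx2 (h ▸ Set.mem_insert x S)
    · exact hfrob.1 (h ▸ Set.mem_insert F S)
end

section
/- Let S be an irreducible numerical semigroup with Frobenius number F and let x be a minimal generator of S satisfying F/2 < x < F, 2x − F ∉ S, 3x ≠ 2F, and 4x ≠ 3F. Then (S \ {x}) ∪ {F − x} is an irreducible numerical semigroup with Frobenius number F. -/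
lemma ns_mem_of_gt {S : Set ℕ} {F : ℕ} (hF : IsFrobenius S F) {n : ℕ} (h : F < n) : n ∈ S := by
  by_contra hn; exact absurd (hF.2 n hn) (by omega)

lemma sym_of_irred {S : Set ℕ} (hS : IsIrreducibleNS S) {F : ℕ}
    (hF : IsFrobenius S F) : ∀ n, n ∉ S → 2 * n ≠ F → F - n ∈ S := by
  by_contra hc
  push_neg at hc
  obtain ⟨n0, hn0S, hn02, hn0F⟩ := hc
  have h0S := hS.1.1
  have hadd := hS.1.2.1
  set A : Set ℕ := {n | n ∉ S ∧ F - n ∉ S ∧ 2 * n ≠ F} with hAdef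
  have hmemgt : ∀ m, F < m → m ∈ S := fun m hm => ns_mem_of_gt hF hm
  have hAbdd : BddAbove A := ⟨F, fun a ha => by
    by_contra h; exact ha.1 (hmemgt a (by omega))⟩
  have hAne : A.Nonempty := ⟨n0, hn0S, hn0F, hn02⟩
  have hh'A : sSup A ∈ A := Nat.sSup_mem hAne hAbdd
  set h' := sSup A with hh'def
  obtain ⟨hh'S, hh'F, hh'2⟩ := hh'A
  have hh'le : h' ≤ F := le_of_not_gt (fun h => hh'S (hmemgt _ h))
  have hh'ne : h' ≠ F := by
    intro h; rw [h, Nat.sub_self] at hh'F; exact hh'F h0S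
  have hh'pos : h' ≠ 0 := fun h => hh'S (h ▸ h0S)
  -- step (i): h' + s ∈ S for all nonzero s ∈ S
  have stepi : ∀ s ∈ S, s ≠ 0 → h' + s ∈ S := by
    intro s hs hs0
    by_contra hns
    have hle : h' + s ≤ F := by
      by_contra h; exact hns (hmemgt _ (by omega))
    have hnotA : h' + s ∉ A := fun hmem => by
      have := le_csSup hAbdd hmem
      omega
    have hcase : F - (h' + s) ∈ S ∨ 2 * (h' + s) = F := by
      by_contra hq; push_neg at hq
      exact hnotA ⟨hns, hq.1, hq.2⟩
    rcases hcase with hc1 | hc2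
    · apply hh'F
      have heq : (F - (h' + s)) + s = F - h' := by omega
      exact heq ▸ hadd _ _ hc1 hs
    · have hmS : h' + 2 * s ∉ S := by
        intro hm
        apply hh'F
        have heq : h' + 2 * s = F - h' := by omega
        exact heq ▸ hm
      have hmA : h' + 2 * s ∉ A := fun hmem => by
        have := le_csSup hAbdd hmem
        omega
      apply hmA
      refine ⟨hmS, ?_, by omega⟩
      have heq : F - (h' + 2 * s) = h' := by omega
      rw [heq]; exact hh'S
  -- step (ii): 2 * h' ∈ S
  have step2 : 2 * h' ∈ S := by
    by_contra h2
    have h2le : 2 * h' ≤ F := by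
      by_contra h; exact h2 (hmemgt _ (by omega))
    have hnotA : 2 * h' ∉ A := fun hmem => by
      have := le_csSup hAbdd hmem
      omega
    have hcase : F - 2 * h' ∈ S ∨ 2 * (2 * h') = F := by
      by_contra hq; push_neg at hq
      exact hnotA ⟨h2, hq.1, hq.2⟩
    rcases hcase with hc1 | hc2
    · have hne0 : F - 2 * h' ≠ 0 := by omega
      have hmem := stepi _ hc1 hne0
      apply hh'F
      have heq : h' + (F - 2 * h') = F - h' := by omega
      exact heq ▸ hmem
    · have h3S : 3 * h' ∉ S := by
        intro h3; apply hh'F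
        have heq : 3 * h' = F - h' := by omega
        exact heq ▸ h3
      have h3A : 3 * h' ∈ A := by
        refine ⟨h3S, ?_, by omega⟩
        have heq : F - 3 * h' = h' := by omega
        rw [heq]; exact hh'S
      have := le_csSup hAbdd h3A
      omega
  -- build the two semigroups
  have hF1 : 1 ≤ F := by
    by_contra h
    have hF0 : F = 0 := by omega
    exact hF.1 (hF0 ▸ h0S)
  have hins : ∀ g, 2 * g ∈ S → (∀ s ∈ S, s ≠ 0 → g + s ∈ S) →
      IsNumericalSemigroup (insert g S) := by
    intro g h2g hgs
    refine ⟨Set.mem_insert_of_mem _ h0S, ?_, ?_⟩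
    · intro a b ha hb
      rcases ha with rfl | ha
      · rcases hb with rfl | hb
        · exact Set.mem_insert_of_mem _ (by rw [← two_mul]; exact h2g)
        · rcases eq_or_ne b 0 with rfl | hb0
          · exact Set.mem_insert _ _
          · exact Set.mem_insert_of_mem _ (hgs b hb hb0)
      · rcases hb with rfl | hb
        · rcases eq_or_ne a 0 with rfl | ha0
          · simp
          · rw [add_comm]
            exact Set.mem_insert_of_mem _ (hgs a ha ha0)
        · exact Set.mem_insert_of_mem _ (hadd a b ha hb)
    · exact hS.1.2.2.subset (Set.compl_subset_compl.mpr (Set.subset_insert g S))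
  have hNS1 := hins h' step2 stepi
  have hNS2 := hins F (hmemgt _ (by omega)) (fun s hs hs0 => hmemgt _ (by omega))
  have heq : S = insert h' S ∩ insert F S := by
    ext z
    simp only [Set.mem_inter_iff, Set.mem_insert_iff]
    constructor
    · intro hz; exact ⟨Or.inr hz, Or.inr hz⟩
    · rintro ⟨rfl | hz1, hz2 | hz2⟩
      · exact absurd hz2 hh'ne
      · exact hz2
      · exact hz1
      · exact hz1
  rcases hS.2 _ _ hNS1 hNS2 heq with h | h
  · exact hh'S (h ▸ Set.mem_insert h' S)
  · exact hF.1 (h ▸ Set.mem_insert F S)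

lemma irred_of_sym {S : Set ℕ} (hNS : IsNumericalSemigroup S) {F : ℕ}
    (hF : IsFrobenius S F)
    (hsym : ∀ n, n ∉ S → 2 * n ≠ F → F - n ∈ S) : IsIrreducibleNS S := by
  refine ⟨hNS, ?_⟩
  intro S₁ S₂ h1 h2 heq
  have hsub1 : S ⊆ S₁ := heq ▸ Set.inter_subset_left
  have hsub2 : S ⊆ S₂ := heq ▸ Set.inter_subset_right
  have key : ∀ T : Set ℕ, IsNumericalSemigroup T → S ⊆ T → F ∉ T → S = T := by
    intro T hT hsub hFT
    refine Set.Subset.antisymm hsub (fun a haT => ?_)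
    by_contra haS
    have haF : a ≤ F := hF.2 a haS
    rcases eq_or_ne (2 * a) F with h2a | h2a
    · exact hFT (by rw [← h2a, two_mul]; exact hT.2.1 a a haT haT)
    · have hFa := hsym a haS h2a
      have hmem := hT.2.1 a (F - a) haT (hsub hFa)
      rw [show a + (F - a) = F by omega] at hmem
      exact hFT hmem
  by_cases hF1 : F ∈ S₁
  · right
    refine key S₂ h2 hsub2 (fun hF2 => ?_)
    exact hF.1 (heq ▸ (⟨hF1, hF2⟩ : F ∈ S₁ ∩ S₂))
  · left; exact key S₁ h1 hsub1 hF1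

theorem stmt18 (S : Set ℕ) (hS : IsIrreducibleNS S) (F : ℕ)
    (hF : IsFrobenius S F) (x : ℕ) (hx : IsMinGen S x)
    (h1 : F < 2 * x) (h2 : x < F) (h3 : 2 * x - F ∉ S)
    (h4 : 3 * x ≠ 2 * F) (h5 : 4 * x ≠ 3 * F) :
    IsIrreducibleNS ((S \ {x}) ∪ {F - x}) ∧
    IsFrobenius ((S \ {x}) ∪ {F - x}) F := by
  obtain ⟨hxS, hx0, hxmin⟩ := hx
  have h0S := hS.1.1
  have hadd := hS.1.2.1
  have hfin := hS.1.2.2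
  have hsym := sym_of_irred hS hF
  have hmemgt : ∀ m, F < m → m ∈ S := fun m hm => ns_mem_of_gt hF hm
  have hyS : F - x ∉ S := by
    intro h
    apply hF.1
    have := hadd x (F - x) hxS h
    rwa [show x + (F - x) = F by omega] at this
  set T := (S \ {x}) ∪ {F - x} with hTdef
  have hmemT : ∀ z, z ∈ T ↔ (z ∈ S ∧ z ≠ x) ∨ z = F - x := by
    intro z
    simp only [hTdef, Set.mem_union, Set.mem_diff, Set.mem_singleton_iff]
  -- key: (F - x) + a ∈ S and ≠ x, for a ∈ S nonzero, a ≠ x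
  have hkey : ∀ a ∈ S, a ≠ 0 → a ≠ x → (F - x) + a ∈ S ∧ (F - x) + a ≠ x := by
    intro a haS ha0 hax
    have hne : (F - x) + a ≠ x := by
      intro h
      exact h3 (by rwa [show 2 * x - F = a by omega])
    refine ⟨?_, hne⟩
    by_contra hns
    have hle : (F - x) + a ≤ F := by
      by_contra h; exact hns (hmemgt _ (by omega))
    rcases eq_or_ne (2 * ((F - x) + a)) F with hcF | hcF
    · have h2a : 2 * a ∈ S := by
        have := hadd a a haS haS; rwa [← two_mul] at this
      exact h3 (by rwa [show 2 * x - F = 2 * a by omega])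
    · have := hsym _ hns hcF
      rw [show F - ((F - x) + a) = x - a by omega] at this
      exact hxmin (x - a) a this haS (by omega) ha0 (by omega)
  have h2y : 2 * (F - x) ∈ S ∧ 2 * (F - x) ≠ x := by
    constructor
    · by_contra hns
      rcases eq_or_ne (2 * (2 * (F - x))) F with hcF | hcF
      · omega
      · have := hsym _ hns hcF
        rw [show F - 2 * (F - x) = 2 * x - F by omega] at this
        exact h3 this
    · intro h; omega
  -- T is a numerical semigroup
  have hTNS : IsNumericalSemigroup T := by
    refine ⟨(hmemT 0).2 (Or.inl ⟨h0S, fun h => hx0 h.symm⟩), ?_, ?_⟩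
    · intro a b ha hb
      rw [hmemT] at ha hb ⊢
      rcases ha with ⟨haS, hax⟩ | rfl
      · rcases hb with ⟨hbS, hbx⟩ | rfl
        · left
          refine ⟨hadd a b haS hbS, ?_⟩
          rcases eq_or_ne a 0 with rfl | ha0
          · simpa using hbx
          rcases eq_or_ne b 0 with rfl | hb0
          · simpa using hax
          exact hxmin a b haS hbS ha0 hb0
        · rcases eq_or_ne a 0 with rfl | ha0
          · right; simp
          · left
            rw [add_comm]
            exact hkey a haS ha0 hax
      · rcases hb with ⟨hbS, hbx⟩ | rfl
        · rcases eq_or_ne b 0 with rfl | hb0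
          · right; simp
          · left; exact hkey b hbS hb0 hbx
        · left
          rw [← two_mul]
          exact h2y
    · refine (hfin.union (Set.finite_singleton x)).subset ?_
      intro z hz
      simp only [Set.mem_compl_iff] at hz
      rw [hmemT] at hz
      push_neg at hz
      by_cases hzS : z ∈ S
      · right
        have := hz.1 hzS
        simpa using this
      · left; exact hzS
  -- Frobenius of T is F
  have hTF : IsFrobenius T F := by
    constructor
    · rw [hmemT]
      rintro (⟨hFS, _⟩ | hFy)
      · exact hF.1 hFS
      · omega
    · intro m hm
      rw [hmemT] at hm
      push_neg at hm
      by_cases hmS : m ∈ S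
      · have := hm.1 hmS; omega
      · exact hF.2 m hmS
  refine ⟨?_, hTF⟩
  apply irred_of_sym hTNS hTF
  intro n hn hn2
  rw [hmemT] at hn
  push_neg at hn
  rw [hmemT]
  by_cases hnS : n ∈ S
  · have hnx : n = x := hn.1 hnS
    right; rw [hnx]
  · have hny : n ≠ F - x := hn.2
    have hFn : F - n ∈ S := hsym n hnS hn2
    left
    refine ⟨hFn, ?_⟩
    intro h
    have hnF : n ≤ F := hF.2 n hnS
    apply hny
    omega
end

section
/- The numerical semigroup S generated by {5, 7, 9, 13}, i.e., S = {0, 5, 7, 9, 10, 12, 13, 14, ...} = ℕ \ {1, 2, 3, 4, 6, 8, 11}, satisfies E(S) = {8, 11}; in particular S is atomic with Frobenius number 11 but not irreducible. -/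
def S0 : Set ℕ := (({1, 2, 3, 4, 6, 8, 11} : Set ℕ))ᶜ

lemma memS0 (n : ℕ) : n ∈ S0 ↔
    ¬(n = 1 ∨ n = 2 ∨ n = 3 ∨ n = 4 ∨ n = 6 ∨ n = 8 ∨ n = 11) := by
  simp [S0, Set.mem_compl_iff]

lemma nsS0 : IsNumericalSemigroup S0 := by
  refine ⟨by rw [memS0]; omega, ?_, ?_⟩
  · intro a b ha hb
    rw [memS0] at *
    omega
  · apply Set.Finite.subset (Set.finite_Iic 11)
    intro x hx
    simp only [S0, compl_compl] at hx
    simp at hx ⊢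
    omega

lemma frobS0 : IsFrobenius S0 11 := by
  constructor
  · rw [memS0]; omega
  · intro m hm
    rw [memS0] at hm
    omega

lemma keyT (T : Set ℕ) (hT : IsNumericalSemigroup T) (hS : S0 ⊆ T)
    (hF : IsFrobenius T 11) : ∀ x ∈ T, x ∉ S0 → x = 8 := by
  obtain ⟨h0, hadd, hfin⟩ := hT
  have h5 : (5 : ℕ) ∈ T := hS (by rw [memS0]; omega)
  have h7 : (7 : ℕ) ∈ T := hS (by rw [memS0]; omega)
  have h9 : (9 : ℕ) ∈ T := hS (by rw [memS0]; omega)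
  intro x hx hxS
  rw [memS0] at hxS
  have h11 := hF.1
  rcases (by omega : x = 1 ∨ x = 2 ∨ x = 3 ∨ x = 4 ∨ x = 6 ∨ x = 8 ∨ x = 11) with
    h | h | h | h | h | h | h
  · subst h
    exact absurd (hadd _ _ (hadd _ _ hx h5) h5) h11
  · subst h; exact absurd (hadd _ _ hx h9) h11
  · subst h
    exact absurd (hadd _ _ (hadd _ _ hx hx) h5) h11
  · subst h; exact absurd (hadd _ _ hx h7) h11
  · subst h; exact absurd (hadd _ _ hx h5) h11
  · exact h
  · subst h; exact absurd hx h11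

theorem stmt19 :
    IsNumericalSemigroup (({1, 2, 3, 4, 6, 8, 11} : Set ℕ)ᶜ) ∧
    IsFrobenius (({1, 2, 3, 4, 6, 8, 11} : Set ℕ)ᶜ) 11 ∧
    specialGaps (({1, 2, 3, 4, 6, 8, 11} : Set ℕ)ᶜ) = {8, 11} ∧
    IsAtomicNS (({1, 2, 3, 4, 6, 8, 11} : Set ℕ)ᶜ) ∧
    ¬ IsIrreducibleNS (({1, 2, 3, 4, 6, 8, 11} : Set ℕ)ᶜ) := by
  have hns := nsS0
  have hfr := frobS0
  refine ⟨hns, hfr, ?_, ⟨hns, ?_⟩, ?_⟩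
  · -- specialGaps
    ext x
    simp only [specialGaps, Set.mem_setOf_eq, Set.mem_insert_iff, Set.mem_singleton_iff]
    show (x ∉ S0 ∧ 2 * x ∈ S0 ∧ ∀ s ∈ S0, s ≠ 0 → x + s ∈ S0) ↔ _
    constructor
    · rintro ⟨hx, h2, h3⟩
      rw [memS0] at hx h2
      have h5 : (5 : ℕ) ∈ S0 := by rw [memS0]; omega
      rcases (by omega : x = 1 ∨ x = 2 ∨ x = 3 ∨ x = 4 ∨ x = 6 ∨ x = 8 ∨ x = 11) with
        h | h | h | h | h | h | h
      · omega
      · omega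
      · omega
      · omega
      · subst h
        have := h3 5 h5 (by norm_num)
        rw [memS0] at this
        omega
      · left; exact h
      · right; exact h
    · rintro (h | h) <;> subst h <;>
        refine ⟨by rw [memS0]; omega, by rw [memS0]; omega, ?_⟩ <;>
        · intro s hs hs0
          rw [memS0] at hs ⊢
          omega
  · -- atomic
    intro F S₁ S₂ hF hns1 hns2 hF1 hF2 heq
    have hF11 : F = 11 := le_antisymm (hfr.2 F hF.1) (hF.2 11 hfr.1)
    subst hF11
    have heq' : S0 = S₁ ∩ S₂ := heq
    have hsub1 : S0 ⊆ S₁ := by rw [heq']; exact Set.inter_subset_left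
    have hsub2 : S0 ⊆ S₂ := by rw [heq']; exact Set.inter_subset_right
    have k1 := keyT S₁ hns1 hsub1 hF1
    have k2 := keyT S₂ hns2 hsub2 hF2
    by_contra hcon
    push_neg at hcon
    obtain ⟨hne1, hne2⟩ := hcon
    have e1 : ∃ x ∈ S₁, x ∉ S0 := by
      by_contra h
      push_neg at h
      exact hne1 (Set.Subset.antisymm hsub1 h)
    have e2 : ∃ x ∈ S₂, x ∉ S0 := by
      by_contra h
      push_neg at h
      exact hne2 (Set.Subset.antisymm hsub2 h)
    obtain ⟨x, hx1, hxS⟩ := e1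
    obtain ⟨y, hy2, hyS⟩ := e2
    have hx8 := k1 x hx1 hxS
    have hy8 := k2 y hy2 hyS
    subst hx8
    rw [hy8] at hy2
    have : (8 : ℕ) ∈ S0 := heq' ▸ ⟨hx1, hy2⟩
    exact hxS this
  · -- not irreducible
    rintro ⟨-, h⟩
    have hns1 : IsNumericalSemigroup (({1, 2, 3, 4, 6, 11} : Set ℕ)ᶜ) := by
      refine ⟨by simp, ?_, ?_⟩
      · intro a b ha hb
        simp only [Set.mem_compl_iff, Set.mem_insert_iff, Set.mem_singleton_iff] at *
        omega
      · apply Set.Finite.subset (Set.finite_Iic 11)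
        intro x hx
        simp only [compl_compl] at hx
        simp at hx ⊢
        omega
    have hns2 : IsNumericalSemigroup (({1, 2, 3, 4, 6, 8} : Set ℕ)ᶜ) := by
      refine ⟨by simp, ?_, ?_⟩
      · intro a b ha hb
        simp only [Set.mem_compl_iff, Set.mem_insert_iff, Set.mem_singleton_iff] at *
        omega
      · apply Set.Finite.subset (Set.finite_Iic 11)
        intro x hx
        simp only [compl_compl] at hx
        simp at hx ⊢
        omega
    have heq : (({1, 2, 3, 4, 6, 8, 11} : Set ℕ)ᶜ) =
        (({1, 2, 3, 4, 6, 11} : Set ℕ)ᶜ) ∩ (({1, 2, 3, 4, 6, 8} : Set ℕ)ᶜ) := by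
      ext x
      simp only [Set.mem_compl_iff, Set.mem_inter_iff, Set.mem_insert_iff,
        Set.mem_singleton_iff]
      omega
    rcases h _ _ hns1 hns2 heq with h' | h'
    · have : (8 : ℕ) ∈ (({1, 2, 3, 4, 6, 8, 11} : Set ℕ)ᶜ) := by
        rw [h']; simp
      rw [show (({1, 2, 3, 4, 6, 8, 11} : Set ℕ)ᶜ) = S0 from rfl, memS0] at this
      omega
    · have : (11 : ℕ) ∈ (({1, 2, 3, 4, 6, 8, 11} : Set ℕ)ᶜ) := by
        rw [h']; simp
      rw [show (({1, 2, 3, 4, 6, 8, 11} : Set ℕ)ᶜ) = S0 from rfl, memS0] at this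
      omega
end
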